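/- No subgroup of G_k of index 3 is normal: if K is a subgroup of G_k with index 3, then K is not a normal subgroup. -/

import Mathlib

/-- `Gk k` is the free product of `k+1` copies of the cyclic group of order two. -/
abbrev Gk (k : ℕ) : Type :=
  Monoid.CoprodI (fun _ : Fin (k + 1) => Multiplicative (ZMod 2))

/-- The canonical generator `a_i` of `Gk k`. -/
def gen (k : ℕ) (i : Fin (k + 1)) : Gk k :=
  Monoid.CoprodI.of (M := fun _ : Fin (k + 1) => Multiplicative (ZMod 2)) (i := i)
    (Multiplicative.ofAdd (1 : ZMod 2))

theorem stmt18 (k : ℕ) (K : Subgroup (Gk k)) (hK : K.index = 3) :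
    ¬ K.Normal := by
  intro hN
  have hQ : Nat.card (Gk k ⧸ K) = 3 := hK
  have key : ∀ g : Gk k, g ∈ K := by
    intro g
    induction g using Monoid.CoprodI.induction_on with
    | one => exact K.one_mem
    | of i m =>
      have hm : m ^ 2 = 1 := by revert m; decide
      have h2 : ((Monoid.CoprodI.of (i := i) m : Gk k) : Gk k ⧸ K) ^ 2 = 1 := by
        rw [← QuotientGroup.mk_pow, ← map_pow, hm, map_one, QuotientGroup.mk_one]
      have hd2 : orderOf ((Monoid.CoprodI.of (i := i) m : Gk k) : Gk k ⧸ K) ∣ 2 :=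
        orderOf_dvd_of_pow_eq_one h2
      have hd3 : orderOf ((Monoid.CoprodI.of (i := i) m : Gk k) : Gk k ⧸ K) ∣ 3 := by
        rw [← hQ]; exact orderOf_dvd_natCard _
      have h1 : orderOf ((Monoid.CoprodI.of (i := i) m : Gk k) : Gk k ⧸ K) = 1 :=
        Nat.dvd_one.mp (Nat.dvd_gcd hd2 hd3)
      exact (QuotientGroup.eq_one_iff _).mp (orderOf_eq_one_iff.mp h1)
    | mul x y hx hy => exact K.mul_mem hx hy
  have : K = ⊤ := (Subgroup.eq_top_iff' K).mpr key
  rw [this, Subgroup.index_top] at hK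
  omega
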